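/- arXiv:1403.5619 — 4 statements merged into one kernel-verified Lean document; each statement's English description precedes it below -/
import Mathlib

section
/- The harmonic Koebe function K = h + conj∘g, where h(z) = (z − z²/2 + z³/6)/(1−z)³ and g(z) = (z²/2 + z³/6)/(1−z)³, belongs to S⁰_H(S); that is, K is sense-preserving (|g'(z)| < |h'(z)| on 𝔻), K is injective on 𝔻, h(0) = g(0) = 0, h'(0) = 1, g'(0) = 0, and h − g (which equals the Koebe function z/(1−z)²) is injective on 𝔻. -/
open Metric Complex ComplexConjugate

private lemma HK_ne {z : ℂ} (hz : ‖z‖ < 1) : (1:ℂ) - z ≠ 0 := by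
  intro h
  have : z = 1 := by linear_combination -h
  simp [this] at hz

private lemma HK_hderiv (z : ℂ) (hz : (1:ℂ) - z ≠ 0) :
    HasDerivAt (fun w : ℂ => (w - w ^ 2 / 2 + w ^ 3 / 6) / (1 - w) ^ 3)
      ((1 + z) / (1 - z) ^ 4) z := by
  have num : HasDerivAt (fun w : ℂ => w - w ^ 2 / 2 + w ^ 3 / 6) (1 - z + z ^ 2 / 2) z := by
    have := ((hasDerivAt_id z).sub ((hasDerivAt_pow 2 z).div_const 2)).add
      ((hasDerivAt_pow 3 z).div_const 6)
    refine this.congr_deriv ?_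
    push_cast
    ring
  have den : HasDerivAt (fun w : ℂ => (1 - w) ^ 3) (3 * (1 - z) ^ 2 * (-1)) z := by
    have : HasDerivAt (fun w : ℂ => 1 - w) (-1) z := (hasDerivAt_id z).const_sub 1
    simpa using this.fun_pow 3
  have := num.div den (pow_ne_zero 3 hz)
  refine this.congr_deriv ?_
  field_simp
  ring

private lemma HK_gderiv (z : ℂ) (hz : (1:ℂ) - z ≠ 0) :
    HasDerivAt (fun w : ℂ => (w ^ 2 / 2 + w ^ 3 / 6) / (1 - w) ^ 3)
      (z * ((1 + z) / (1 - z) ^ 4)) z := by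
  have num : HasDerivAt (fun w : ℂ => w ^ 2 / 2 + w ^ 3 / 6) (z + z ^ 2 / 2) z := by
    have := ((hasDerivAt_pow 2 z).div_const 2).add ((hasDerivAt_pow 3 z).div_const 6)
    refine this.congr_deriv ?_
    push_cast
    ring
  have den : HasDerivAt (fun w : ℂ => (1 - w) ^ 3) (3 * (1 - z) ^ 2 * (-1)) z := by
    have : HasDerivAt (fun w : ℂ => 1 - w) (-1) z := (hasDerivAt_id z).const_sub 1
    simpa using this.fun_pow 3
  have := num.div den (pow_ne_zero 3 hz)
  refine this.congr_deriv ?_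
  field_simp
  ring

private lemma HK_key (p q y1 y2 : ℝ) (hp : 0 < p) (hq : 0 < q) (h1 : y1 * p = y2 * q)
    (h2 : p ^ 3 - 12 * y1 ^ 2 * p = q ^ 3 - 12 * y2 ^ 2 * q) : p = q ∧ y1 = y2 := by
  have hsq : y1 ^ 2 * p ^ 2 = y2 ^ 2 * q ^ 2 := by
    rw [show y1 ^ 2 * p ^ 2 = (y1 * p) ^ 2 by ring, show y2 ^ 2 * q ^ 2 = (y2 * q) ^ 2 by ring, h1]
  have hfac : (p - q) * (p * q * (p ^ 2 + p * q + q ^ 2) + 12 * y1 ^ 2 * p ^ 2) = 0 := by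
    linear_combination p * q * h2 + 12 * p * hsq
  have hpq : p = q := by
    rcases mul_eq_zero.mp hfac with h | h
    · linarith
    · nlinarith [mul_pos hp hq, sq_nonneg y1, sq_nonneg (p + q), sq_nonneg p]
  refine ⟨hpq, ?_⟩
  rw [hpq] at h1
  exact mul_right_cancel₀ hq.ne' h1

private lemma HK_pos {z : ℂ} (hz : ‖z‖ < 1) : 0 < 1 + 2 * (z / (1 - z)).re := by
  have h1 : (1:ℂ) - z ≠ 0 := HK_ne hz
  have hD : 0 < Complex.normSq (1 - z) := normSq_pos.mpr h1
  have hD' : Complex.normSq (1 - z) = (1 - z.re) ^ 2 + z.im ^ 2 := by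
    simp [Complex.normSq_apply, Complex.sub_re, Complex.sub_im]
    ring
  have hlt : z.re ^ 2 + z.im ^ 2 < 1 := by
    have := Complex.sq_norm z
    nlinarith [norm_nonneg z, Complex.normSq_apply z]
  have hre : (z / (1 - z)).re = (z.re - z.re ^ 2 - z.im ^ 2) / Complex.normSq (1 - z) := by
    rw [Complex.div_re]
    simp [Complex.sub_re, Complex.sub_im]
    ring
  have key : 1 + 2 * ((z.re - z.re ^ 2 - z.im ^ 2) / Complex.normSq (1 - z))
      = (Complex.normSq (1 - z) + 2 * (z.re - z.re ^ 2 - z.im ^ 2)) / Complex.normSq (1 - z) := by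
    field_simp
  rw [hre, key]
  apply div_pos _ hD
  rw [hD']
  nlinarith

private lemma HK_E1 (z : ℂ) (hz : (1:ℂ) - z ≠ 0) :
    3 * ((z - z ^ 2 / 2 + z ^ 3 / 6) / (1 - z) ^ 3 + (z ^ 2 / 2 + z ^ 3 / 6) / (1 - z) ^ 3)
      = 3 * (z / (1 - z)) + 6 * (z / (1 - z)) ^ 2 + 4 * (z / (1 - z)) ^ 3 := by
  field_simp
  ring

private lemma HK_E2 (z : ℂ) (hz : (1:ℂ) - z ≠ 0) :
    (z - z ^ 2 / 2 + z ^ 3 / 6) / (1 - z) ^ 3 - (z ^ 2 / 2 + z ^ 3 / 6) / (1 - z) ^ 3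
      = z / (1 - z) + (z / (1 - z)) ^ 2 := by
  field_simp
  ring

private lemma HK_reP (t : ℂ) : (3 * t + 6 * t ^ 2 + 4 * t ^ 3).re
    = 3 * t.re + 6 * (t.re ^ 2 - t.im ^ 2) + 4 * (t.re ^ 3 - 3 * t.re * t.im ^ 2) := by
  simp [pow_succ, Complex.add_re, Complex.mul_re, Complex.mul_im]
  ring

private lemma HK_imk (t : ℂ) : (t + t ^ 2).im = t.im + 2 * t.re * t.im := by
  simp [pow_succ, Complex.add_im, Complex.mul_im]
  ring

private lemma HK_mem {z : ℂ} (hz : z ∈ ball (0:ℂ) 1) : ‖z‖ < 1 := by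
  simpa using mem_ball_zero_iff.mp hz

private lemma HK_koebe_inj : Set.InjOn (fun z : ℂ => z / (1 - z) ^ 2) (ball (0:ℂ) 1) := by
  intro a ha b hb hab
  have ha' := HK_mem ha
  have hb' := HK_mem hb
  have h1a := HK_ne ha'
  have h1b := HK_ne hb'
  dsimp only at hab
  have hcr : a * (1 - b) ^ 2 = b * (1 - a) ^ 2 :=
    (div_eq_div_iff (pow_ne_zero 2 h1a) (pow_ne_zero 2 h1b)).mp hab
  have hfac : (a - b) * (1 - a * b) = 0 := by linear_combination hcr
  rcases mul_eq_zero.mp hfac with h | h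
  · linear_combination h
  · exfalso
    have hab1 : a * b = 1 := by linear_combination -h
    have : ‖a * b‖ < 1 := by
      rw [norm_mul]
      nlinarith [norm_nonneg a, norm_nonneg b]
    rw [hab1] at this
    simp at this

private lemma HK_inj : Set.InjOn (fun z : ℂ =>
    (z - z ^ 2 / 2 + z ^ 3 / 6) / (1 - z) ^ 3 + conj ((z ^ 2 / 2 + z ^ 3 / 6) / (1 - z) ^ 3))
    (ball (0:ℂ) 1) := by
  intro a ha b hb hab
  have ha' := HK_mem ha
  have hb' := HK_mem hb
  have h1a := HK_ne ha'
  have h1b := HK_ne hb'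
  dsimp only at hab
  -- real and imaginary parts of the equation
  have hRe : ((a - a ^ 2 / 2 + a ^ 3 / 6) / (1 - a) ^ 3).re + ((a ^ 2 / 2 + a ^ 3 / 6) / (1 - a) ^ 3).re
      = ((b - b ^ 2 / 2 + b ^ 3 / 6) / (1 - b) ^ 3).re + ((b ^ 2 / 2 + b ^ 3 / 6) / (1 - b) ^ 3).re := by
    have := congrArg Complex.re hab
    simp only [Complex.add_re, Complex.conj_re] at this
    exact this
  have hIm : ((a - a ^ 2 / 2 + a ^ 3 / 6) / (1 - a) ^ 3).im - ((a ^ 2 / 2 + a ^ 3 / 6) / (1 - a) ^ 3).im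
      = ((b - b ^ 2 / 2 + b ^ 3 / 6) / (1 - b) ^ 3).im - ((b ^ 2 / 2 + b ^ 3 / 6) / (1 - b) ^ 3).im := by
    have := congrArg Complex.im hab
    simp only [Complex.add_im, Complex.conj_im] at this
    linarith
  have key1 : (3 * (a / (1 - a)) + 6 * (a / (1 - a)) ^ 2 + 4 * (a / (1 - a)) ^ 3).re
      = (3 * (b / (1 - b)) + 6 * (b / (1 - b)) ^ 2 + 4 * (b / (1 - b)) ^ 3).re := by
    rw [← HK_E1 a h1a, ← HK_E1 b h1b]
    simp [Complex.mul_re, Complex.add_re]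
    linarith
  have key2 : (a / (1 - a) + (a / (1 - a)) ^ 2).im = (b / (1 - b) + (b / (1 - b)) ^ 2).im := by
    rw [← HK_E2 a h1a, ← HK_E2 b h1b]
    simp [Complex.sub_im]
    linarith
  rw [HK_reP, HK_reP] at key1
  rw [HK_imk, HK_imk] at key2
  set x1 := (a / (1 - a)).re
  set y1 := (a / (1 - a)).im
  set x2 := (b / (1 - b)).re
  set y2 := (b / (1 - b)).im
  have hp := HK_pos ha'
  have hq := HK_pos hb'
  obtain ⟨hpq, hy⟩ := HK_key (1 + 2 * x1) (1 + 2 * x2) y1 y2 hp hq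
    (by linear_combination key2) (by linear_combination 2 * key1)
  have hteq : a / (1 - a) = b / (1 - b) := Complex.ext (by linarith) hy
  have := (div_eq_div_iff h1a h1b).mp hteq
  linear_combination this

/-- The harmonic Koebe function `K = h + conj ∘ g` belongs to `S⁰_H(S)`:
it is sense-preserving, injective on `𝔻`, normalized, and `h - g` (the analytic
Koebe function) is injective on `𝔻`. -/
theorem harmonic_koebe_mem_S0HS :
    let h : ℂ → ℂ := fun z => (z - z ^ 2 / 2 + z ^ 3 / 6) / (1 - z) ^ 3
    let g : ℂ → ℂ := fun z => (z ^ 2 / 2 + z ^ 3 / 6) / (1 - z) ^ 3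
    (∀ z ∈ ball (0:ℂ) 1, ‖deriv g z‖ < ‖deriv h z‖) ∧
    Set.InjOn (fun z => h z + conj (g z)) (ball (0:ℂ) 1) ∧
    h 0 = 0 ∧ g 0 = 0 ∧ deriv h 0 = 1 ∧ deriv g 0 = 0 ∧
    (∀ z ∈ ball (0:ℂ) 1, h z - g z = z / (1 - z) ^ 2) ∧
    Set.InjOn (fun z => h z - g z) (ball (0:ℂ) 1) := by
  intro h g
  refine ⟨?_, HK_inj, ?_, ?_, ?_, ?_, ?_, ?_⟩
  · intro z hz
    have hz' := HK_mem hz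
    have h1 := HK_ne hz'
    rw [(HK_hderiv z h1).deriv, (HK_gderiv z h1).deriv, norm_mul]
    have hne : (1 + z) / (1 - z) ^ 4 ≠ 0 := by
      apply div_ne_zero _ (pow_ne_zero 4 h1)
      intro hc
      have : z = -1 := by linear_combination hc
      simp [this] at hz'
    have hpos : 0 < ‖(1 + z) / (1 - z) ^ 4‖ := norm_pos_iff.mpr hne
    exact (mul_lt_iff_lt_one_left hpos).mpr hz'
  · show (0 - 0 ^ 2 / 2 + 0 ^ 3 / 6 : ℂ) / (1 - 0) ^ 3 = 0
    norm_num
  · show (0 ^ 2 / 2 + 0 ^ 3 / 6 : ℂ) / (1 - 0) ^ 3 = 0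
    norm_num
  · rw [(HK_hderiv 0 (by norm_num)).deriv]
    norm_num
  · rw [(HK_gderiv 0 (by norm_num)).deriv]
    norm_num
  · intro z hz
    have h1 := HK_ne (HK_mem hz)
    show (z - z ^ 2 / 2 + z ^ 3 / 6) / (1 - z) ^ 3 - (z ^ 2 / 2 + z ^ 3 / 6) / (1 - z) ^ 3
      = z / (1 - z) ^ 2
    field_simp
    ring
  · have : Set.EqOn (fun z : ℂ => h z - g z) (fun z : ℂ => z / (1 - z) ^ 2) (ball (0:ℂ) 1) := by
      intro z hz
      have h1 := HK_ne (HK_mem hz)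
      show (z - z ^ 2 / 2 + z ^ 3 / 6) / (1 - z) ^ 3 - (z ^ 2 / 2 + z ^ 3 / 6) / (1 - z) ^ 3
        = z / (1 - z) ^ 2
      field_simp
      ring
    intro a ha b hb hab
    exact HK_koebe_inj ha hb (by rw [← this ha, ← this hb]; exact hab)
end

section
/- Let h(z) = (z − z²/2 + z³/6)/(1−z)³ and g(z) = (z²/2 + z³/6)/(1−z)³ be the analytic and co-analytic parts of the harmonic Koebe function, and for θ ∈ [0, 2π) let φ_θ = h + e^{iθ}g. Then φ_θ is injective on 𝔻 if and only if θ = π. -/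
open Metric Complex

noncomputable def Complex.abs : AbsoluteValue ℂ ℝ :=
  IsAbsoluteValue.toAbsoluteValue (norm : ℂ → ℝ)

@[simp] lemma Complex.abs_ofNat (n : ℕ) [n.AtLeastTwo] :
    Complex.abs (no_index (OfNat.ofNat n : ℂ)) = OfNat.ofNat n := Complex.norm_ofNat n

lemma Complex.norm_eq_abs (z : ℂ) : ‖z‖ = Complex.abs z := rfl

lemma Complex.abs_ofReal (x : ℝ) : Complex.abs (x : ℂ) = |x| := Complex.norm_real x

lemma Complex.re_le_abs (z : ℂ) : z.re ≤ Complex.abs z := Complex.re_le_norm z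

lemma Complex.abs_re_le_abs (z : ℂ) : |z.re| ≤ Complex.abs z := Complex.abs_re_le_norm z

lemma Complex.abs_im_le_abs (z : ℂ) : |z.im| ≤ Complex.abs z := Complex.abs_im_le_norm z

lemma Complex.sq_abs (z : ℂ) : Complex.abs z ^ 2 = Complex.normSq z := Complex.sq_norm z

lemma Complex.abs_exp_ofReal_mul_I (x : ℝ) : Complex.abs (Complex.exp (x * Complex.I)) = 1 :=
  Complex.norm_exp_ofReal_mul_I x

lemma exists_sqrt' (z : ℂ) : ∃ x : ℂ, x ^ 2 = z ∧ 0 ≤ x.re := by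
  by_cases hz : z = 0
  · exact ⟨0, by simp [hz], by simp⟩
  set x0 := z ^ (1/2 : ℂ) with hx0
  have h2 : x0 ^ 2 = z := by
    rw [hx0, sq, ← cpow_add _ _ hz]; norm_num
  rcases le_or_gt 0 x0.re with h | h
  · exact ⟨x0, h2, h⟩
  · exact ⟨-x0, by rw [neg_pow]; simpa using h2, by simpa using h.le⟩

lemma cabs_sub_le' (x y : ℂ) : Complex.abs (x - y) ≤ Complex.abs x + Complex.abs y := by
  rw [← Complex.norm_eq_abs, ← Complex.norm_eq_abs, ← Complex.norm_eq_abs]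
  exact norm_sub_le x y

set_option maxHeartbeats 1000000 in
lemma notInj (a : ℂ) (ha : Complex.abs a = 1) (ha1 : a ≠ -1) :
    ¬ Set.InjOn
      (fun z : ℂ => (z - z ^ 2 / 2 + z ^ 3 / 6) / (1 - z) ^ 3
          + a * ((z ^ 2 / 2 + z ^ 3 / 6) / (1 - z) ^ 3))
      (ball (0:ℂ) 1) := by
  intro hinj
  have hd : (1:ℂ) + a ≠ 0 := fun h => ha1 (by linear_combination h)
  set r : ℝ := Complex.abs (1 + a) / 100 with hrdef
  have hr : 0 < r := by
    have := Complex.abs.pos hd; rw [hrdef]; linarith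
  have hdr : Complex.abs (1 + a) = 100 * r := by rw [hrdef]; ring
  have hr2 : r ≤ 1/50 := by
    have h2 : Complex.abs (1 + a) ≤ 2 := by
      calc Complex.abs (1 + a) ≤ Complex.abs 1 + Complex.abs a := Complex.abs.add_le _ _
      _ = 2 := by rw [ha, map_one]; norm_num
    rw [hrdef]; linarith
  have h13 : Complex.abs (1 + 3*a) ≤ 4 := by
    calc Complex.abs (1 + 3*a) ≤ Complex.abs 1 + Complex.abs (3*a) := Complex.abs.add_le _ _
    _ ≤ 4 := by rw [map_one, map_mul, ha]; norm_num
  obtain ⟨v, hv2, hvre⟩ := exists_sqrt'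
    (4*(r:ℂ)^2 + (9*(1+3*a)^2 - 96*(1+a)*a)*(r:ℂ)^4/(16*(1+a)^2))
  obtain ⟨s, hsdef⟩ : ∃ s : ℂ, s = 3*(1+3*a)*(r:ℂ)^2/(8*(1+a)) + v/2 := ⟨_, rfl⟩
  have hv2' : 16*(1+a)^2*v^2 = 64*(1+a)^2*(r:ℂ)^2 + (9*(1+3*a)^2 - 96*(1+a)*a)*(r:ℂ)^4 := by
    field_simp at hv2
    linear_combination hv2
  have h8s : 8*(1+a)*s = 3*(1+3*a)*(r:ℂ)^2 + 4*(1+a)*v := by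
    rw [hsdef]; field_simp; ring
  have hquad : 4*(1+a)*s^2 - 3*(1+3*a)*(r:ℂ)^2*s + 6*a*(r:ℂ)^4 - 4*(1+a)*(r:ℂ)^2 = 0 := by
    have h64 : (64:ℂ)*(1+a)^2 ≠ 0 := by
      apply mul_ne_zero (by norm_num) (pow_ne_zero _ hd)
    have key : 64*(1+a)^2*(4*(1+a)*s^2 - 3*(1+3*a)*(r:ℂ)^2*s + 6*a*(r:ℂ)^4 - 4*(1+a)*(r:ℂ)^2)
        = 0 := by
      linear_combination (4*(1+a)*(8*(1+a)*s + 4*(1+a)*v - 3*(1+3*a)*(r:ℂ)^2)) * h8s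
        + (4*(1+a)) * hv2'
    rcases mul_eq_zero.mp key with h | h
    · exact absurd h h64
    · exact h
  -- numerator bound
  have hnum : Complex.abs (9*(1+3*a)^2 - 96*(1+a)*a) ≤ 336 := by
    have h1 := cabs_sub_le' (9*(1+3*a)^2) (96*(1+a)*a)
    have h2' : Complex.abs (9*(1+3*a)^2) ≤ 144 := by
      rw [map_mul, map_pow]
      have h9 : Complex.abs (9:ℂ) = 9 := by norm_num
      rw [h9]
      nlinarith [Complex.abs.nonneg (1+3*a)]
    have h3' : Complex.abs (96*(1+a)*a) ≤ 192 := by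
      rw [map_mul, map_mul, ha]
      have h96 : Complex.abs (96:ℂ) = 96 := by norm_num
      rw [h96, hdr]
      nlinarith [hr, hr2]
    linarith
  have hv4 : Complex.abs (v^2 - 4*(r:ℂ)^2) ≤ 0.0021*r^2 := by
    have e : v^2 - 4*(r:ℂ)^2 = (9*(1+3*a)^2 - 96*(1+a)*a)*(r:ℂ)^4/(16*(1+a)^2) := by
      rw [hv2]; ring
    rw [e, map_div₀, map_mul]
    have hden : Complex.abs (16*(1+a)^2) = 160000*r^2 := by
      rw [map_mul, map_pow, hdr]
      have h16 : Complex.abs (16:ℂ) = 16 := by norm_num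
      rw [h16]; ring
    have hrc4 : Complex.abs ((r:ℂ)^4) = r^4 := by
      rw [map_pow, Complex.abs_ofReal, abs_of_pos hr]
    rw [hden, hrc4, div_le_iff₀ (by positivity)]
    nlinarith [mul_le_mul_of_nonneg_right hnum (by positivity : (0:ℝ) ≤ r^4)]
  have hvplus : 2*r ≤ Complex.abs (v + 2*(r:ℂ)) := by
    have h1 : (v + 2*(r:ℂ)).re = v.re + 2*r := by simp
    calc 2*r ≤ (v + 2*(r:ℂ)).re := by rw [h1]; linarith
    _ ≤ Complex.abs (v + 2*(r:ℂ)) := Complex.re_le_abs _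
  have hvminus : Complex.abs (v - 2*(r:ℂ)) ≤ 0.0011*r := by
    have hfac : Complex.abs (v - 2*(r:ℂ)) * Complex.abs (v + 2*(r:ℂ))
        = Complex.abs (v^2 - 4*(r:ℂ)^2) := by
      rw [← map_mul]; congr 1; ring
    nlinarith [mul_le_mul_of_nonneg_left hvplus (Complex.abs.nonneg (v - 2*(r:ℂ))), hr]
  have hβ : Complex.abs (3*(1+3*a)*(r:ℂ)^2/(8*(1+a))) ≤ 0.015*r := by
    have e1 : Complex.abs (3*(1+3*a)*(r:ℂ)^2) ≤ 12*r^2 := by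
      rw [map_mul, map_mul, map_pow, Complex.abs_ofReal, abs_of_pos hr]
      have h3 : Complex.abs (3:ℂ) = 3 := by norm_num
      rw [h3]
      nlinarith [pow_pos hr 2]
    have e2 : Complex.abs (8*(1+a)) = 800*r := by
      rw [map_mul, hdr]
      have h8 : Complex.abs (8:ℂ) = 8 := by norm_num
      rw [h8]; ring
    rw [map_div₀, e2, div_le_iff₀ (by positivity)]
    nlinarith [hr]
  have hvhalf : Complex.abs ((v - 2*(r:ℂ))/2) ≤ 0.00055*r := by
    rw [map_div₀]
    have h2 : Complex.abs (2:ℂ) = 2 := by norm_num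
    rw [h2]; linarith
  have hsr : Complex.abs (s - (r:ℂ)) ≤ 0.0156*r := by
    have e : s - (r:ℂ) = 3*(1+3*a)*(r:ℂ)^2/(8*(1+a)) + (v - 2*(r:ℂ))/2 := by
      rw [hsdef]; ring
    rw [e]
    have := Complex.abs.add_le (3*(1+3*a)*(r:ℂ)^2/(8*(1+a))) ((v - 2*(r:ℂ))/2)
    linarith
  have hsre : 0.9844*r ≤ s.re := by
    have h1 : |(s - (r:ℂ)).re| ≤ Complex.abs (s - (r:ℂ)) := Complex.abs_re_le_abs _
    have h2 : (s - (r:ℂ)).re = s.re - r := by simp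
    rw [h2] at h1
    have h3 := abs_le.mp (h1.trans hsr)
    linarith [h3.1]
  have hsabs : Complex.abs s ≤ 1.0156*r := by
    have e : s = (s - (r:ℂ)) + (r:ℂ) := by ring
    calc Complex.abs s = Complex.abs ((s - (r:ℂ)) + (r:ℂ)) := by rw [← e]
    _ ≤ Complex.abs (s - (r:ℂ)) + Complex.abs (r:ℂ) := Complex.abs.add_le _ _
    _ ≤ 1.0156*r := by rw [Complex.abs_ofReal, abs_of_pos hr]; linarith
  obtain ⟨Q, hQ2, -⟩ := exists_sqrt' (s^2 - 4*(r:ℂ)^2)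
  have hsplus : Complex.abs (s + (r:ℂ)) ≤ 2.0156*r := by
    calc Complex.abs (s + (r:ℂ)) ≤ Complex.abs s + Complex.abs (r:ℂ) := Complex.abs.add_le _ _
    _ ≤ 2.0156*r := by rw [Complex.abs_ofReal, abs_of_pos hr]; linarith
  have hQ3 : Complex.abs (Q^2 + 3*(r:ℂ)^2) ≤ 0.0315*r^2 := by
    have e : Q^2 + 3*(r:ℂ)^2 = (s - (r:ℂ))*(s + (r:ℂ)) := by rw [hQ2]; ring
    rw [e, map_mul]
    have hmul := mul_le_mul hsr hsplus (Complex.abs.nonneg (s + (r:ℂ))) (by positivity : (0:ℝ) ≤ 0.0156*r)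
    nlinarith [hmul, sq_nonneg r, hr]
  have hQne : Q ≠ 0 := by
    intro h
    rw [h] at hQ3
    have e : (0:ℂ)^2 + 3*(r:ℂ)^2 = ((3*r^2 : ℝ) : ℂ) := by push_cast; ring
    rw [e, Complex.abs_ofReal, abs_of_pos (by positivity)] at hQ3
    nlinarith [hr]
  have hQabs : Complex.abs Q ≤ 1.7412*r := by
    have h1 : (Complex.abs Q)^2 ≤ 3.0315*r^2 := by
      have h2 : Complex.abs (Q^2) ≤ 0.0315*r^2 + 3*r^2 := by
        have e : Q^2 = (Q^2 + 3*(r:ℂ)^2) - 3*(r:ℂ)^2 := by ring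
        have h3 := cabs_sub_le' (Q^2 + 3*(r:ℂ)^2) (3*(r:ℂ)^2)
        have e2 : Complex.abs (3*(r:ℂ)^2) = 3*r^2 := by
          have e3 : 3*(r:ℂ)^2 = ((3*r^2 : ℝ) : ℂ) := by push_cast; ring
          rw [e3, Complex.abs_ofReal, abs_of_pos (by positivity)]
        rw [e2] at h3
        calc Complex.abs (Q^2) = Complex.abs ((Q^2 + 3*(r:ℂ)^2) - 3*(r:ℂ)^2) := by rw [← e]
        _ ≤ Complex.abs (Q^2 + 3*(r:ℂ)^2) + 3*r^2 := h3
        _ ≤ 0.0315*r^2 + 3*r^2 := by linarith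
      rw [map_pow] at h2
      linarith
    nlinarith [Complex.abs.nonneg Q, hr, sq_nonneg (Complex.abs Q - 1.7412*r)]
  have hQre2 : (Q^2).re ≤ -2.9685*r^2 := by
    have e2 : Q^2 + 3*(r:ℂ)^2 = Q^2 + ((3*r^2 : ℝ) : ℂ) := by push_cast; ring
    have h1 : (Q^2 + 3*(r:ℂ)^2).re ≤ Complex.abs (Q^2 + 3*(r:ℂ)^2) := Complex.re_le_abs _
    rw [e2] at h1
    simp only [Complex.add_re, Complex.ofReal_re] at h1
    rw [← e2] at h1
    linarith
  have hQim2 : 2.9685*r^2 ≤ Q.im^2 := by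
    have h1 : (Q^2).re = Q.re^2 - Q.im^2 := by rw [sq, Complex.mul_re]; ring
    nlinarith [sq_nonneg Q.re]
  have hQim : 1.7229*r ≤ |Q.im| := by
    nlinarith [abs_nonneg Q.im, _root_.sq_abs Q.im, hr]
  have hQre : |Q.re| ≤ 0.00915*r := by
    have h1 : (Q^2).im = 2*Q.re*Q.im := by rw [sq, Complex.mul_im]; ring
    have h2 : |(Q^2).im| ≤ 0.0315*r^2 := by
      have e2 : Q^2 + 3*(r:ℂ)^2 = Q^2 + ((3*r^2 : ℝ) : ℂ) := by push_cast; ring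
      have e : (Q^2).im = (Q^2 + 3*(r:ℂ)^2).im := by
        rw [e2, Complex.add_im, Complex.ofReal_im]; ring
      rw [e]; exact (Complex.abs_im_le_abs _).trans hQ3
    rw [h1] at h2
    have h3 : |2*Q.re*Q.im| = 2*(|Q.re| * |Q.im|) := by
      rw [abs_mul, abs_mul, _root_.abs_two]; ring
    rw [h3] at h2
    nlinarith [abs_nonneg Q.re, hQim, hr, mul_le_mul_of_nonneg_left hQim (abs_nonneg Q.re)]
  -- membership helper
  have hmem : ∀ q : ℂ, Complex.abs q ≤ 1.7412*r → |q.re| ≤ 0.00915*r →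
      Complex.abs (1 - (s+q)/2) < 1 := by
    intro q h1 h2
    have hure : 0.4876*r ≤ ((s+q)/2).re := by
      have e : ((s+q)/2).re = (s.re + q.re)/2 := by
        rw [show ((s+q)/2 : ℂ) = (s+q) / ((2:ℝ):ℂ) by norm_num, Complex.div_ofReal_re]
        simp
      rw [e]
      have h4 := abs_le.mp h2
      linarith [h4.1]
    have huabs : Complex.abs ((s+q)/2) ≤ 1.3784*r := by
      rw [map_div₀]
      have h2' : Complex.abs (2:ℂ) = 2 := by norm_num
      rw [h2']
      have := Complex.abs.add_le s q
      linarith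
    have hsq : (Complex.abs (1 - (s+q)/2))^2
        = 1 - 2*((s+q)/2).re + (Complex.abs ((s+q)/2))^2 := by
      rw [Complex.sq_abs, Complex.sq_abs, Complex.normSq_apply, Complex.normSq_apply]
      simp only [Complex.sub_re, Complex.sub_im, Complex.one_re, Complex.one_im]
      ring
    nlinarith [Complex.abs.nonneg (1 - (s+q)/2), Complex.abs.nonneg ((s+q)/2), hr, hr2,
      mul_le_mul huabs huabs (Complex.abs.nonneg _) (by positivity : (0:ℝ) ≤ 1.3784*r)]
  obtain ⟨u₁, hu₁⟩ : ∃ u : ℂ, u = (s + Q)/2 := ⟨_, rfl⟩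
  obtain ⟨u₂, hu₂⟩ : ∃ u : ℂ, u = (s - Q)/2 := ⟨_, rfl⟩
  have hm₁ : Complex.abs (1 - u₁) < 1 := by rw [hu₁]; exact hmem Q hQabs hQre
  have hm₂ : Complex.abs (1 - u₂) < 1 := by
    have h := hmem (-Q) (by rw [Complex.abs.map_neg]; exact hQabs)
      (by rw [Complex.neg_re, abs_neg]; exact hQre)
    have e : (1:ℂ) - (s + -Q)/2 = 1 - u₂ := by rw [hu₂]; ring
    rwa [e] at h
  have hu₁0 : u₁ ≠ 0 := by intro h; rw [h] at hm₁; simp at hm₁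
  have hu₂0 : u₂ ≠ 0 := by intro h; rw [h] at hm₂; simp at hm₂
  have hz₁m : (1 - u₁) ∈ ball (0:ℂ) 1 := by
    rw [mem_ball, Complex.dist_eq, sub_zero]; exact hm₁
  have hz₂m : (1 - u₂) ∈ ball (0:ℂ) 1 := by
    rw [mem_ball, Complex.dist_eq, sub_zero]; exact hm₂
  have hsum : u₁ + u₂ = s := by rw [hu₁, hu₂]; ring
  have hprod : u₁ * u₂ = (r:ℂ)^2 := by
    rw [hu₁, hu₂]; linear_combination (-1/4 : ℂ) * hQ2
  have hEu : 4*(1+a)*((u₁+u₂)^2 - u₁*u₂) - 3*(1+3*a)*(u₁+u₂)*(u₁*u₂) + 6*a*(u₁*u₂)^2 = 0 := by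
    rw [hsum, hprod]; linear_combination hquad
  have hfeq : ((1-u₁) - (1-u₁)^2/2 + (1-u₁)^3/6)/(1-(1-u₁))^3
        + a*(((1-u₁)^2/2 + (1-u₁)^3/6)/(1-(1-u₁))^3)
      = ((1-u₂) - (1-u₂)^2/2 + (1-u₂)^3/6)/(1-(1-u₂))^3
        + a*(((1-u₂)^2/2 + (1-u₂)^3/6)/(1-(1-u₂))^3) := by
    have e₁ : (1:ℂ) - (1 - u₁) = u₁ := by ring
    have e₂ : (1:ℂ) - (1 - u₂) = u₂ := by ring
    have hM₁ : ((1-u₁) - (1-u₁)^2/2 + (1-u₁)^3/6)/(1-(1-u₁))^3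
        + a*(((1-u₁)^2/2 + (1-u₁)^3/6)/(1-(1-u₁))^3)
        = (2*(1+a)/3 - (1+3*a)/2*u₁ + a*u₁^2 - (1+a)/6*u₁^3)/u₁^3 := by
      rw [e₁]; field_simp; ring
    have hM₂ : ((1-u₂) - (1-u₂)^2/2 + (1-u₂)^3/6)/(1-(1-u₂))^3
        + a*(((1-u₂)^2/2 + (1-u₂)^3/6)/(1-(1-u₂))^3)
        = (2*(1+a)/3 - (1+3*a)/2*u₂ + a*u₂^2 - (1+a)/6*u₂^3)/u₂^3 := by
      rw [e₂]; field_simp; ring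
    rw [hM₁, hM₂, div_eq_div_iff (pow_ne_zero 3 hu₁0) (pow_ne_zero 3 hu₂0)]
    linear_combination ((u₂ - u₁)/6) * hEu
  have h12 := hinj hz₁m hz₂m hfeq
  have h12' : u₁ = u₂ := by linear_combination -h12
  rw [hu₁, hu₂] at h12'
  exact hQne (by linear_combination h12')

/-- For the harmonic Koebe function with parts `h`, `g`, the analytic function
`φ_θ = h + e^{iθ} g` is injective on `𝔻` if and only if `θ = π` (for `θ ∈ [0, 2π)`). -/
theorem koebe_shear_injective_iff_pi (θ : ℝ) (hθ0 : 0 ≤ θ) (hθ2 : θ < 2 * Real.pi) :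
    Set.InjOn
      (fun z : ℂ => (z - z ^ 2 / 2 + z ^ 3 / 6) / (1 - z) ^ 3
          + Complex.exp (θ * Complex.I) * ((z ^ 2 / 2 + z ^ 3 / 6) / (1 - z) ^ 3))
      (ball (0:ℂ) 1)
    ↔ θ = Real.pi := by
  constructor
  · intro hinj
    by_contra hne
    refine notInj (Complex.exp (θ * I)) (Complex.abs_exp_ofReal_mul_I θ) ?_ hinj
    intro hexp
    apply hne
    have hpi : Complex.exp (θ * I) = Complex.exp (Real.pi * I) := by
      rw [hexp, Complex.exp_pi_mul_I]
    rw [Complex.exp_eq_exp_iff_exists_int] at hpi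
    obtain ⟨n, hn⟩ := hpi
    have hre : (θ : ℂ) = Real.pi + n * (2 * Real.pi) := by
      have hI : ((θ : ℂ) - Real.pi - n * (2 * Real.pi)) * I = 0 := by
        linear_combination hn
      have := mul_eq_zero.mp hI
      simp [Complex.I_ne_zero] at this
      linear_combination this
    have hreal : θ = Real.pi + n * (2 * Real.pi) := by exact_mod_cast hre
    have hpi0 := Real.pi_pos
    have hn0 : n = 0 := by
      rcases lt_trichotomy n 0 with h | h | h
      · have : (n : ℝ) ≤ -1 := by exact_mod_cast (by omega : n ≤ -1)
        nlinarith
      · exact h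
      · have : (1 : ℝ) ≤ n := by exact_mod_cast h
        nlinarith
    rw [hn0] at hreal; simpa using hreal
  · intro hθ
    subst hθ
    intro z₁ h₁ z₂ h₂ h
    simp only [Complex.exp_pi_mul_I] at h
    rw [mem_ball, Complex.dist_eq, sub_zero, Complex.norm_eq_abs] at h₁ h₂
    have hz₁ : (1:ℂ) - z₁ ≠ 0 := by
      intro hc
      have : z₁ = 1 := by linear_combination -hc
      rw [this] at h₁; simp at h₁
    have hz₂ : (1:ℂ) - z₂ ≠ 0 := by
      intro hc
      have : z₂ = 1 := by linear_combination -hc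
      rw [this] at h₂; simp at h₂
    have hz₁₂ : (1:ℂ) - z₁ * z₂ ≠ 0 := by
      intro hc
      have h1 : Complex.abs (z₁ * z₂) = 1 := by
        have : z₁ * z₂ = 1 := by linear_combination -hc
        simp [this]
      rw [map_mul] at h1
      nlinarith [Complex.abs.nonneg z₁, Complex.abs.nonneg z₂]
    field_simp at h
    have key : (z₁ - z₂) * ((1 - z₁ * z₂) * (((1:ℂ) - z₁) * (1 - z₂))) = 0 := by
      linear_combination h / 12
    rcases mul_eq_zero.mp key with h' | h'
    · linear_combination h'
    · rcases mul_eq_zero.mp h' with h'' | h''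
      · exact absurd h'' hz₁₂
      · exact absurd h'' (mul_ne_zero hz₁ hz₂)
end

section
/- The harmonic function f₄ = h + conj∘g, where h(z) = (1 − (1−z)³)/(3(1−z)³) and g(z) = z³/(3(1−z)³), is sense-preserving and injective on 𝔻. -/
open Metric Complex ComplexConjugate

lemma f4_aux (w : ℂ) :
    (w^3 + ((starRingEnd ℂ) w - 1)^3).im = 3 * w.im * (2*w.re - 1) ∧
    (w^3 + ((starRingEnd ℂ) w - 1)^3).re
      = w.re^3 + (w.re-1)^3 - 3*(2*w.re-1)*w.im^2 := by
  constructor <;>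
  · simp [pow_succ, Complex.mul_im, Complex.mul_re, Complex.sub_re, Complex.sub_im,
      Complex.conj_re, Complex.conj_im, Complex.one_re, Complex.one_im]
    ring

-- real algebra key lemma
lemma f4_key (x y u v : ℝ) (hx : 1/2 < x) (hu : 1/2 < u)
    (e1 : y * (2*x - 1) = v * (2*u - 1))
    (e2 : x^3 + (x-1)^3 - 3*(2*x-1)*y^2 = u^3 + (u-1)^3 - 3*(2*u-1)*v^2) :
    x = u ∧ y = v := by
  have hp : 0 < 2*x - 1 := by linarith
  have hq : 0 < 2*u - 1 := by linarith
  have fact : (x - u) * ((2*x-1)*(2*u-1)*((2*x-1)^2 + (2*x-1)*(2*u-1) + (2*u-1)^2)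
      + 3*(2*x-1)*(2*u-1) + 12*((2*x-1)*y)^2) = 0 := by
    linear_combination (2*(2*x-1)*(2*u-1)) * e2 + (6*(2*x-1)*((2*x-1)*y + (2*u-1)*v)) * e1
  have hM : 0 < (2*x-1)*(2*u-1)*((2*x-1)^2 + (2*x-1)*(2*u-1) + (2*u-1)^2)
      + 3*(2*x-1)*(2*u-1) + 12*((2*x-1)*y)^2 := by
    have h1 : 0 < (2*x-1)*(2*u-1) := mul_pos hp hq
    have h2 : 0 < (2*x-1)^2 + (2*x-1)*(2*u-1) + (2*u-1)^2 := by positivity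
    nlinarith [mul_pos h1 h2, sq_nonneg ((2*x-1)*y)]
  have hxu : x = u := by
    have := mul_eq_zero.mp fact
    rcases this with h | h
    · linarith
    · linarith
  refine ⟨hxu, ?_⟩
  subst hxu
  exact mul_right_cancel₀ (ne_of_gt hq) e1

/-- The harmonic function `f₄ = h + conj ∘ g`, where `h(z) = (1-(1-z)³)/(3(1-z)³)` and
`g(z) = z³/(3(1-z)³)`, is sense-preserving and injective on `𝔻`. -/
theorem f4_sense_preserving_and_injective :
    let h : ℂ → ℂ := fun z => (1 - (1 - z) ^ 3) / (3 * (1 - z) ^ 3)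
    let g : ℂ → ℂ := fun z => z ^ 3 / (3 * (1 - z) ^ 3)
    (∀ z ∈ ball (0:ℂ) 1, ‖deriv g z‖ < ‖deriv h z‖) ∧
    Set.InjOn (fun z => h z + conj (g z)) (ball (0:ℂ) 1) := by
  intro h g
  have habs : ∀ z ∈ ball (0:ℂ) 1, ‖z‖ < 1 := by
    intro z hz; simpa [Complex.dist_eq] using mem_ball.mp hz
  have hne : ∀ z ∈ ball (0:ℂ) 1, (1 : ℂ) - z ≠ 0 := by
    intro z hz hc
    have hz1 : z = 1 := by linear_combination -hc
    have h2 := habs z hz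
    rw [hz1] at h2
    simp at h2
  have hderivh : ∀ z ∈ ball (0:ℂ) 1, deriv h z = ((1 - z)^4)⁻¹ := by
    intro z hz
    have h1 : (1 : ℂ) - z ≠ 0 := hne z hz
    have d1 : HasDerivAt (fun w : ℂ => 1 - (1 - w)^3) (3*(1-z)^2) z := by
      have db : HasDerivAt (fun w : ℂ => 1 - w) (-1) z := (hasDerivAt_id z).const_sub 1
      have := (db.pow 3).const_sub 1
      refine this.congr_deriv ?_; ring
    have d2 : HasDerivAt (fun w : ℂ => 3*(1 - w)^3) (-9*(1-z)^2) z := by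
      have db : HasDerivAt (fun w : ℂ => 1 - w) (-1) z := (hasDerivAt_id z).const_sub 1
      have := (db.pow 3).const_mul (3:ℂ)
      refine this.congr_deriv ?_; ring
    have hd3 : (3:ℂ)*(1-z)^3 ≠ 0 := by
      simp [pow_eq_zero_iff, sub_eq_zero]
      intro hc; exact h1 (by rw [hc]; ring)
    have := (d1.div d2 hd3).deriv
    rw [show h = ((fun w : ℂ => 1 - (1 - w)^3) / fun w : ℂ => 3*(1 - w)^3) from rfl, this]
    field_simp
    ring
  have hderivg : ∀ z ∈ ball (0:ℂ) 1, deriv g z = z^2 * ((1 - z)^4)⁻¹ := by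
    intro z hz
    have h1 : (1 : ℂ) - z ≠ 0 := hne z hz
    have d1 : HasDerivAt (fun w : ℂ => w^3) (3*z^2) z := by
      simpa using hasDerivAt_pow 3 z
    have d2 : HasDerivAt (fun w : ℂ => 3*(1 - w)^3) (-9*(1-z)^2) z := by
      have db : HasDerivAt (fun w : ℂ => 1 - w) (-1) z := (hasDerivAt_id z).const_sub 1
      have := (db.pow 3).const_mul (3:ℂ)
      refine this.congr_deriv ?_; ring
    have hd3 : (3:ℂ)*(1-z)^3 ≠ 0 := by
      simp [pow_eq_zero_iff, sub_eq_zero]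
      intro hc; exact h1 (by rw [hc]; ring)
    have := (d1.div d2 hd3).deriv
    rw [show g = ((fun w : ℂ => w^3) / fun w : ℂ => 3*(1 - w)^3) from rfl, this]
    field_simp
    ring
  constructor
  · intro z hz
    rw [hderivh z hz, hderivg z hz]
    have h1 : (1 : ℂ) - z ≠ 0 := hne z hz
    have hpos : 0 < ‖((1 - z)^4)⁻¹‖ := by
      have h2 : 0 < ‖1 - z‖ := norm_pos_iff.mpr h1
      simp only [norm_inv, norm_pow]
      positivity
    rw [norm_mul]
    have hz2 : ‖z^2‖ < 1 := by
      rw [norm_pow]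
      calc ‖z‖ ^ 2 ≤ ‖z‖ * 1 := by
            nlinarith [habs z hz, norm_nonneg z]
        _ < 1 := by simpa using habs z hz
    nlinarith [hpos, norm_nonneg (z^2)]
  · intro a ha b hb heq
    simp only at heq
    have ha1 : (1:ℂ) - a ≠ 0 := hne a ha
    have hb1 : (1:ℂ) - b ≠ 0 := hne b hb
    have ha2 : (1:ℂ) - (starRingEnd ℂ) a ≠ 0 := by
      intro hc
      have h3 : (starRingEnd ℂ) a = 1 := by linear_combination -hc
      have h4 := congrArg (starRingEnd ℂ) h3
      simp at h4
      exact ha1 (by rw [h4]; ring)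
    have hb2 : (1:ℂ) - (starRingEnd ℂ) b ≠ 0 := by
      intro hc
      have h3 : (starRingEnd ℂ) b = 1 := by linear_combination -hc
      have h4 := congrArg (starRingEnd ℂ) h3
      simp at h4
      exact hb1 (by rw [h4]; ring)
    set A := ((1:ℂ) - a)⁻¹ with hA
    set B := ((1:ℂ) - b)⁻¹ with hB
    have hcA : ((1:ℂ) - (starRingEnd ℂ) a)⁻¹ = (starRingEnd ℂ) A := by
      rw [hA, map_inv₀, map_sub, map_one]
    have hcB : ((1:ℂ) - (starRingEnd ℂ) b)⁻¹ = (starRingEnd ℂ) B := by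
      rw [hB, map_inv₀, map_sub, map_one]
    simp only [h, g, map_div₀, map_pow, map_mul, map_sub, map_one, map_ofNat] at heq
    have lhsa : (1 - (1 - a)^3)/(3*(1-a)^3) + (starRingEnd ℂ) a^3/(3*(1-(starRingEnd ℂ) a)^3)
        = (A^3 + ((starRingEnd ℂ) A - 1)^3 - 1)/3 := by
      rw [hA, ← hcA]
      field_simp
      ring
    have lhsb : (1 - (1 - b)^3)/(3*(1-b)^3) + (starRingEnd ℂ) b^3/(3*(1-(starRingEnd ℂ) b)^3)
        = (B^3 + ((starRingEnd ℂ) B - 1)^3 - 1)/3 := by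
      rw [hB, ← hcB]
      field_simp
      ring
    rw [lhsa, lhsb] at heq
    have E : A^3 + ((starRingEnd ℂ) A - 1)^3 = B^3 + ((starRingEnd ℂ) B - 1)^3 := by
      linear_combination 3 * heq
    -- half-plane conditions
    have hre : ∀ z : ℂ, z ∈ ball (0:ℂ) 1 → 1/2 < (((1:ℂ) - z)⁻¹).re := by
      intro z hz
      have h1 : (1:ℂ) - z ≠ 0 := hne z hz
      have hnsq : 0 < Complex.normSq (1 - z) := Complex.normSq_pos.mpr h1
      rw [Complex.inv_re, lt_div_iff₀ hnsq]
      have h2 : Complex.normSq z < 1 := by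
        have h3 := habs z hz
        have h4 := Complex.sq_norm z
        nlinarith [norm_nonneg z]
      simp only [Complex.normSq_apply, Complex.sub_re, Complex.sub_im, Complex.one_re,
        Complex.one_im] at h2 ⊢
      nlinarith
    have hxA : 1/2 < A.re := hre a ha
    have hxB : 1/2 < B.re := hre b hb
    have ei := congrArg Complex.im E
    have er := congrArg Complex.re E
    rw [(f4_aux A).1, (f4_aux B).1] at ei
    rw [(f4_aux A).2, (f4_aux B).2] at er
    have e1 : A.im * (2*A.re - 1) = B.im * (2*B.re - 1) := by linear_combination ei / 3
    obtain ⟨hxu, hyv⟩ := f4_key A.re A.im B.re B.im hxA hxB e1 er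
    have hAB : A = B := Complex.ext hxu hyv
    have h5 : (1:ℂ) - a = 1 - b := inv_injective hAB
    linear_combination -h5
end

section
/- Let a ∈ ℝ with a ≥ 1 + √2, let λ ∈ ℂ with |λ| = 1, and define φ(z) = a·log(a/(a−z)) + λ·(a·log(a/(a−z)) − z) on 𝔻, where log denotes the branch of the logarithm with log(1) = 0 (well-defined since a/(a−z) lies in the right half-plane for z ∈ 𝔻). Then φ'(z) = (a + λz)/(a − z) and Re(1 + z·φ''(z)/φ'(z)) > 0 for all z ∈ 𝔻; in particular φ is a convex univalent function on 𝔻. -/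
open Metric Complex Set Filter

noncomputable section

namespace StudyAux

lemma neg_abs_le' (z : ℂ) : -(‖z‖) ≤ z.re := by
  have h := Complex.re_le_norm (-z)
  rw [Complex.neg_re, norm_neg] at h
  linarith

lemma re_div_add (b : ℝ) (u : ℂ) (hb : 2 < b) (hu : ‖u‖ < 1) :
    -(‖u‖) / (b - ‖u‖) ≤ (u / ((b : ℂ) + u)).re := by
  have ht0 : 0 ≤ ‖u‖ := norm_nonneg u
  have hre : -(‖u‖) ≤ u.re := neg_abs_le' u
  have hsq : u.re ^ 2 + u.im ^ 2 = (‖u‖) ^ 2 := by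
    rw [Complex.sq_norm, Complex.normSq_apply]; ring
  have hwre : ((b : ℂ) + u).re = b + u.re := by simp
  have hwim : ((b : ℂ) + u).im = u.im := by simp
  have hD : Complex.normSq ((b : ℂ) + u) = (b + u.re) ^ 2 + u.im ^ 2 := by
    rw [Complex.normSq_apply, hwre, hwim]; ring
  have hDpos : 0 < (b + u.re) ^ 2 + u.im ^ 2 := by nlinarith
  rw [Complex.div_re, hwre, hwim, hD, ← add_div,
    div_le_div_iff₀ (by linarith) hDpos]
  nlinarith [mul_nonneg (mul_nonneg (by linarith : (0:ℝ) ≤ b)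
      (by linarith : (0:ℝ) ≤ b + ‖u‖))
      (by linarith : (0:ℝ) ≤ u.re + ‖u‖), hsq]

lemma re_div_sub (b : ℝ) (u : ℂ) (hb : 2 < b) (hu : ‖u‖ < 1) :
    -(‖u‖) / (b + ‖u‖) ≤ (u / ((b : ℂ) - u)).re := by
  have ht0 : 0 ≤ ‖u‖ := norm_nonneg u
  have hre : -(‖u‖) ≤ u.re := neg_abs_le' u
  have hsq : u.re ^ 2 + u.im ^ 2 = (‖u‖) ^ 2 := by
    rw [Complex.sq_norm, Complex.normSq_apply]; ring
  have hwre : ((b : ℂ) - u).re = b - u.re := by simp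
  have hwim : ((b : ℂ) - u).im = -u.im := by simp
  have hD : Complex.normSq ((b : ℂ) - u) = (b - u.re) ^ 2 + u.im ^ 2 := by
    rw [Complex.normSq_apply, hwre, hwim]; ring
  have hre' : u.re ≤ ‖u‖ := Complex.re_le_norm u
  have hDpos : 0 < (b - u.re) ^ 2 + u.im ^ 2 := by nlinarith
  rw [Complex.div_re, hwre, hwim, hD, ← add_div,
    div_le_div_iff₀ (by linarith) hDpos]
  nlinarith [mul_nonneg (mul_nonneg (by linarith : (0:ℝ) ≤ b)
      (by linarith : (0:ℝ) ≤ b - ‖u‖))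
      (by linarith : (0:ℝ) ≤ u.re + ‖u‖), hsq]

section General

variable {f F G : ℂ → ℂ}

lemma sphere_est
    (h1 : ∀ z ∈ ball (0:ℂ) 1, HasDerivAt f (F z) z)
    (h2 : ∀ z ∈ ball (0:ℂ) 1, HasDerivAt F (G z) z)
    (h3 : ∀ z ∈ ball (0:ℂ) 1, 0 < (F z).re)
    (h4 : ∀ z ∈ ball (0:ℂ) 1, 0 < (1 + z * G z / F z).re)
    {r : ℝ} (hr0 : 0 < r) (hr1 : r < 1) {ζ w : ℂ}
    (hζ : ζ ∈ sphere (0:ℂ) r) (hw : w ∈ sphere (0:ℂ) r) :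
    ((starRingEnd ℂ) (ζ * F ζ) * (f w - f ζ)).re ≤ 0 := by
  have habsζ : ‖ζ‖ = r := by simpa [Complex.dist_eq] using hζ
  have habsw : ‖w‖ = r := by simpa [Complex.dist_eq] using hw
  set P : ℝ → ℂ := fun θ => (r : ℂ) * Complex.exp ((θ : ℂ) * I) with hPdef
  have hPabs : ∀ θ : ℝ, ‖P θ‖ = r := by
    intro θ
    simp [hPdef, Complex.norm_exp_ofReal_mul_I, abs_of_pos hr0]
  have hPball : ∀ θ : ℝ, P θ ∈ ball (0:ℂ) 1 := fun θ => by
    rw [mem_ball_zero_iff, hPabs]; exact hr1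
  have hPd : ∀ θ : ℝ, HasDerivAt P (I * P θ) θ := by
    intro θ
    have h0 : HasDerivAt (fun t : ℝ => (t : ℂ) * I) I θ := by
      simpa using ((hasDerivAt_id ((θ : ℝ) : ℂ)).mul_const I).comp_ofReal
    have h1' := (h0.cexp).const_mul (r : ℂ)
    convert h1' using 1
    · rfl
    simp only [hPdef]
    ring
  have hPmod : ∀ x y : ℝ, (∃ k : ℤ, x - y = k * (2 * Real.pi)) → P x = P y := by
    rintro x y ⟨k, hk⟩
    simp only [hPdef]
    congr 1
    have hxy : (x : ℂ) * I = (y : ℂ) * I + ((k : ℂ) * (2 * Real.pi * I)) := by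
      have h' : (x : ℝ) = y + k * (2 * Real.pi) := by linarith
      rw [h']
      push_cast
      ring
    rw [hxy, Complex.exp_add, Complex.exp_int_mul_two_pi_mul_I, mul_one]
  set A : ℝ → ℝ := fun θ => θ + (Complex.log (F (P θ))).im with hAdef
  have hAd : ∀ θ : ℝ, HasDerivAt A ((1 + P θ * G (P θ) / F (P θ)).re) θ := by
    intro θ
    have hFP : HasDerivAt (fun t : ℝ => F (P t)) ((I * P θ) • G (P θ)) θ :=
      HasDerivAt.scomp_of_eq θ (h2 _ (hPball θ)) (hPd θ) rfl
    have hlog : HasDerivAt (fun t : ℝ => Complex.log (F (P t)))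
        (((I * P θ) • G (P θ)) • (F (P θ))⁻¹) θ :=
      HasDerivAt.scomp_of_eq θ (Complex.hasDerivAt_log (Or.inl (h3 _ (hPball θ)))) hFP rfl
    have him : HasDerivAt (fun t : ℝ => (Complex.log (F (P t))).im)
        ((((I * P θ) • G (P θ)) • (F (P θ))⁻¹).im) θ :=
      Complex.imCLM.hasFDerivAt.comp_hasDerivAt θ hlog
    have hsum : HasDerivAt A (1 + (((I * P θ) • G (P θ)) • (F (P θ))⁻¹).im) θ :=
      (hasDerivAt_id θ).add him
    convert hsum using 1
    have hval : (((I * P θ) • G (P θ)) • (F (P θ))⁻¹) = I * (P θ * G (P θ) / F (P θ)) := by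
      simp only [smul_eq_mul]
      rw [div_eq_mul_inv]
      ring
    rw [Complex.add_re, Complex.one_re, hval]
    simp [Complex.mul_im, Complex.I_re, Complex.I_im]
  have hApos : ∀ θ : ℝ, 0 < (1 + P θ * G (P θ) / F (P θ)).re := fun θ => h4 _ (hPball θ)
  have hAmono : StrictMono A := by
    apply strictMono_of_deriv_pos
    intro θ
    rw [(hAd θ).deriv]
    exact hApos θ
  have hAcont : Continuous A := by
    have hdiff : Differentiable ℝ A := fun θ => (hAd θ).differentiableAt
    exact hdiff.continuous
  have hAper : A (Complex.arg ζ + 2 * Real.pi) = A (Complex.arg ζ) + 2 * Real.pi := by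
    have hPp := hPmod (Complex.arg ζ + 2 * Real.pi) (Complex.arg ζ) ⟨1, by push_cast; ring⟩
    simp only [hAdef, hPp]
    ring
  have hN : ∀ θ : ℝ, P θ * F (P θ)
      = ((r * ‖F (P θ)‖ : ℝ) : ℂ) * Complex.exp (((A θ : ℝ) : ℂ) * I) := by
    intro θ
    have harg : ((A θ : ℝ) : ℂ) = (θ : ℂ) + ((Complex.arg (F (P θ)) : ℝ) : ℂ) := by
      simp only [hAdef, Complex.log_im]
      push_cast
      ring
    have hFv := Complex.norm_mul_exp_arg_mul_I (F (P θ))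
    conv_lhs => rw [← hFv]
    rw [harg, add_mul, Complex.exp_add]
    simp only [hPdef]
    push_cast
    ring
  have hconj : ∀ x : ℝ, (starRingEnd ℂ) (Complex.exp ((x : ℂ) * I))
      = Complex.exp (((-x : ℝ) : ℂ) * I) := by
    intro x
    rw [← Complex.exp_conj]
    congr 1
    simp only [map_mul, Complex.conj_ofReal, Complex.conj_I]
    push_cast
    ring
  set c : ℝ := Complex.arg ζ with hcdef
  have hPc : P c = ζ := by
    simp only [hPdef, hcdef]
    rw [← habsζ]
    exact Complex.norm_mul_exp_arg_mul_I ζ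
  set v : ℝ → ℝ := fun θ => ((starRingEnd ℂ) (ζ * F ζ) * (f (P θ) - f ζ)).re with hvdef
  have hvd : ∀ θ : ℝ, HasDerivAt v
      (-((r * ‖F ζ‖) * (r * ‖F (P θ)‖) * Real.sin (A θ - A c))) θ := by
    intro θ
    have hfP : HasDerivAt (fun t : ℝ => f (P t)) ((I * P θ) • F (P θ)) θ :=
      HasDerivAt.scomp_of_eq θ (h1 _ (hPball θ)) (hPd θ) rfl
    have hmul : HasDerivAt (fun t : ℝ => (starRingEnd ℂ) (ζ * F ζ) * (f (P t) - f ζ))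
        ((starRingEnd ℂ) (ζ * F ζ) * ((I * P θ) • F (P θ))) θ :=
      (hfP.sub_const (f ζ)).const_mul _
    have hre : HasDerivAt v (((starRingEnd ℂ) (ζ * F ζ) * ((I * P θ) • F (P θ))).re) θ :=
      Complex.reCLM.hasFDerivAt.comp_hasDerivAt θ hmul
    convert hre using 1
    have hexp : Complex.exp (((-(A c) : ℝ) : ℂ) * I) * Complex.exp (((A θ : ℝ) : ℂ) * I)
        = Complex.exp (((A θ - A c : ℝ) : ℂ) * I) := by
      rw [← Complex.exp_add]
      congr 1
      push_cast
      ring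
    have h₁ : ζ * F ζ = ((r * ‖F ζ‖ : ℝ) : ℂ)
        * Complex.exp (((A c : ℝ) : ℂ) * I) := by
      have h' := hN c
      rw [hPc] at h'
      exact h'
    have e1 : (starRingEnd ℂ) (ζ * F ζ) * ((I * P θ) • F (P θ))
        = (((r * ‖F ζ‖) * (r * ‖F (P θ)‖) : ℝ) : ℂ)
          * (I * Complex.exp (((A θ - A c : ℝ) : ℂ) * I)) := by
      rw [smul_eq_mul, h₁, map_mul, Complex.conj_ofReal, hconj (A c), ← hexp,
        show I * P θ * F (P θ) = I * (P θ * F (P θ)) from by ring, hN θ]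
      push_cast
      ring
    rw [e1, Complex.re_ofReal_mul]
    simp only [Complex.mul_re, Complex.I_re, Complex.I_im,
      Complex.exp_ofReal_mul_I_re, Complex.exp_ofReal_mul_I_im]
    ring
  have hvcont : Continuous v := by
    have hdiff : Differentiable ℝ v := fun θ => (hvd θ).differentiableAt
    exact hdiff.continuous
  have hv0 : v c = 0 := by simp [hvdef, hPc]
  have hv2π : v (c + 2 * Real.pi) = 0 := by
    have hPp := hPmod (c + 2 * Real.pi) c ⟨1, by push_cast; ring⟩
    simp [hvdef, hPp, hPc]
  obtain ⟨θw, hθwIoc, hPw⟩ : ∃ t, t ∈ Ioc c (c + 2 * Real.pi) ∧ P t = w := by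
    refine ⟨toIocMod Real.two_pi_pos c (Complex.arg w), toIocMod_mem_Ioc _ _ _, ?_⟩
    have hmod : P (toIocMod Real.two_pi_pos c (Complex.arg w)) = P (Complex.arg w) := by
      apply hPmod
      refine ⟨-(toIocDiv Real.two_pi_pos c (Complex.arg w)), ?_⟩
      rw [toIocMod, zsmul_eq_mul]
      push_cast
      ring
    rw [hmod]
    simp only [hPdef]
    rw [← habsw]
    exact Complex.norm_mul_exp_arg_mul_I w
  obtain ⟨θ₁, hθ₁mem, hθ₁⟩ : ∃ t ∈ Icc c (c + 2 * Real.pi), A t = A c + Real.pi := by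
    have hsub := intermediate_value_Icc
      (by linarith [Real.pi_pos] : c ≤ c + 2 * Real.pi) hAcont.continuousOn
    have hmem : A c + Real.pi ∈ Icc (A c) (A (c + 2 * Real.pi)) := by
      rw [hAper]
      constructor <;> linarith [Real.pi_pos.le]
    obtain ⟨t, ht, ht2⟩ := hsub hmem
    exact ⟨t, ht, ht2⟩
  have hgoal : ((starRingEnd ℂ) (ζ * F ζ) * (f w - f ζ)).re = v θw := by
    simp only [hvdef, hPw]
  rw [hgoal]
  rcases le_total θw θ₁ with hcase | hcase
  · have hanti : AntitoneOn v (Icc c θ₁) := by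
      apply antitoneOn_of_deriv_nonpos (convex_Icc _ _) hvcont.continuousOn
      · intro x _
        exact (hvd x).differentiableAt.differentiableWithinAt
      · intro x hx
        rw [interior_Icc] at hx
        rw [(hvd x).deriv]
        have h0 : 0 ≤ A x - A c := by
          have := hAmono.monotone hx.1.le
          linarith
        have h1 : A x - A c ≤ Real.pi := by
          have := hAmono.monotone hx.2.le
          rw [hθ₁] at this
          linarith
        have hsin : 0 ≤ Real.sin (A x - A c) := Real.sin_nonneg_of_nonneg_of_le_pi h0 h1
        have hm : 0 ≤ (r * ‖F ζ‖) * (r * ‖F (P x)‖) := by positivity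
        nlinarith
    have hle : v θw ≤ v c := by
      apply hanti ⟨le_refl c, hθ₁mem.1⟩ ⟨hθwIoc.1.le, hcase⟩ hθwIoc.1.le
    linarith [hv0, hle]
  · have hmono : MonotoneOn v (Icc θ₁ (c + 2 * Real.pi)) := by
      apply monotoneOn_of_deriv_nonneg (convex_Icc _ _) hvcont.continuousOn
      · intro x _
        exact (hvd x).differentiableAt.differentiableWithinAt
      · intro x hx
        rw [interior_Icc] at hx
        rw [(hvd x).deriv]
        have h0 : Real.pi ≤ A x - A c := by
          have := hAmono.monotone hx.1.le
          rw [hθ₁] at this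
          linarith
        have h1 : A x - A c ≤ 2 * Real.pi := by
          have := hAmono.monotone hx.2.le
          rw [hAper] at this
          linarith
        have hsin : Real.sin (A x - A c) ≤ 0 := by
          rw [← Real.sin_sub_two_pi]
          apply Real.sin_nonpos_of_nonpos_of_neg_pi_le
          · linarith
          · linarith
        have hm : 0 ≤ (r * ‖F ζ‖) * (r * ‖F (P x)‖) := by positivity
        nlinarith
    have hle : v θw ≤ v (c + 2 * Real.pi) := by
      apply hmono ⟨hcase, hθwIoc.2⟩ ⟨hθ₁mem.2, le_refl _⟩ hθwIoc.2
    linarith [hv2π, hle]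

lemma halfplane
    (h1 : ∀ z ∈ ball (0:ℂ) 1, HasDerivAt f (F z) z)
    (h2 : ∀ z ∈ ball (0:ℂ) 1, HasDerivAt F (G z) z)
    (h3 : ∀ z ∈ ball (0:ℂ) 1, 0 < (F z).re)
    (h4 : ∀ z ∈ ball (0:ℂ) 1, 0 < (1 + z * G z / F z).re)
    {r : ℝ} (hr0 : 0 < r) (hr1 : r < 1) {ζ : ℂ} (hζ : ζ ∈ sphere (0:ℂ) r) :
    (∀ z ∈ closedBall (0:ℂ) r, ((starRingEnd ℂ) (ζ * F ζ) * (f z - f ζ)).re ≤ 0) ∧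
    (∀ z ∈ ball (0:ℂ) r, ((starRingEnd ℂ) (ζ * F ζ) * (f z - f ζ)).re < 0) := by
  have habsζ : ‖ζ‖ = r := by simpa [Complex.dist_eq] using hζ
  have hζball : ζ ∈ ball (0:ℂ) 1 := by
    rw [mem_ball_zero_iff, habsζ]; exact hr1
  have hfd : DifferentiableOn ℂ f (ball (0:ℂ) 1) := fun z hz =>
    (h1 z hz).differentiableAt.differentiableWithinAt
  set g : ℂ → ℂ := fun z => Complex.exp ((starRingEnd ℂ) (ζ * F ζ) * (f z - f ζ)) with hgdef
  have hgd : DifferentiableOn ℂ g (ball (0:ℂ) 1) :=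
    ((hfd.sub_const _).const_mul _).cexp
  have hsub1 : ball (0:ℂ) r ⊆ ball (0:ℂ) 1 := ball_subset_ball hr1.le
  have hsub2 : closedBall (0:ℂ) r ⊆ ball (0:ℂ) 1 := closedBall_subset_ball hr1
  have hgnorm : ∀ z : ℂ, ‖g z‖
      = Real.exp (((starRingEnd ℂ) (ζ * F ζ) * (f z - f ζ)).re) := by
    intro z
    simp [hgdef, Complex.norm_exp]
  have hweak : ∀ z ∈ closedBall (0:ℂ) r,
      ((starRingEnd ℂ) (ζ * F ζ) * (f z - f ζ)).re ≤ 0 := by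
    intro z hz
    have hb : ∀ x ∈ frontier (ball (0:ℂ) r), ‖g x‖ ≤ 1 := by
      intro x hx
      rw [frontier_ball (0:ℂ) hr0.ne'] at hx
      rw [hgnorm, Real.exp_le_one_iff]
      exact sphere_est h1 h2 h3 h4 hr0 hr1 hζ hx
    have hz' : z ∈ closure (ball (0:ℂ) r) := by
      rwa [closure_ball (0:ℂ) hr0.ne']
    have hdc : DiffContOnCl ℂ g (ball (0:ℂ) r) := by
      refine ⟨hgd.mono hsub1, (hgd.continuousOn).mono ?_⟩
      rw [closure_ball (0:ℂ) hr0.ne']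
      exact hsub2
    have hle := Complex.norm_le_of_forall_mem_frontier_norm_le isBounded_ball hdc hb hz'
    rw [hgnorm] at hle
    exact Real.exp_le_one_iff.mp hle
  refine ⟨hweak, ?_⟩
  intro z hz
  rcases lt_or_eq_of_le (hweak z (ball_subset_closedBall hz)) with h | h
  · exact h
  · exfalso
    have hmax : IsMaxOn (norm ∘ g) (ball (0:ℂ) r) z := by
      rw [isMaxOn_iff]
      intro x hx
      simp only [Function.comp_apply]
      rw [hgnorm, hgnorm, h, Real.exp_zero]
      exact Real.exp_le_one_iff.mpr (hweak x (ball_subset_closedBall hx))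
    have heq := Complex.eqOn_of_isPreconnected_of_isMaxOn_norm
      (convex_ball (0:ℂ) r).isPreconnected isOpen_ball (hgd.mono hsub1) hz hmax
    have hgz : g =ᶠ[nhds z] (fun _ => g z) := by
      filter_upwards [isOpen_ball.mem_nhds hz] with x hx
      exact heq hx
    have hderiv0 : deriv g z = 0 := by
      rw [Filter.EventuallyEq.deriv_eq hgz, deriv_const]
    have hgder : HasDerivAt g
        (Complex.exp ((starRingEnd ℂ) (ζ * F ζ) * (f z - f ζ))
          * ((starRingEnd ℂ) (ζ * F ζ) * F z)) z := by
      have hu : HasDerivAt (fun x => (starRingEnd ℂ) (ζ * F ζ) * (f x - f ζ))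
          ((starRingEnd ℂ) (ζ * F ζ) * F z) z :=
        ((h1 z (hsub1 hz)).sub_const _).const_mul _
      exact hu.cexp
    have h0 := hgder.deriv
    rw [hderiv0] at h0
    have hexp0 : Complex.exp ((starRingEnd ℂ) (ζ * F ζ) * (f z - f ζ)) ≠ 0 :=
      Complex.exp_ne_zero _
    have hζ0 : ζ ≠ 0 := by
      intro hc
      rw [hc] at habsζ
      simp at habsζ
      linarith
    have hFζ0 : F ζ ≠ 0 := by
      intro hc
      have := h3 ζ hζball
      rw [hc] at this
      simp at this
    have hN0 : (starRingEnd ℂ) (ζ * F ζ) ≠ 0 := by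
      intro hc
      apply mul_ne_zero hζ0 hFζ0
      have := congrArg (starRingEnd ℂ) hc
      simpa using this
    have hFz0 : F z = 0 := by
      have h0' := h0.symm
      rcases mul_eq_zero.mp h0' with hc | hc
      · exact absurd hc hexp0
      · rcases mul_eq_zero.mp hc with hc' | hc'
        · exact absurd hc' hN0
        · exact hc'
    have := h3 z (hsub1 hz)
    rw [hFz0] at this
    simp at this

lemma injOn
    (h1 : ∀ z ∈ ball (0:ℂ) 1, HasDerivAt f (F z) z)
    (h2 : ∀ z ∈ ball (0:ℂ) 1, HasDerivAt F (G z) z)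
    (h3 : ∀ z ∈ ball (0:ℂ) 1, 0 < (F z).re) :
    Set.InjOn f (ball (0:ℂ) 1) := by
  intro x hx y hy hxy
  by_contra hne
  have hFc : ContinuousOn F (ball (0:ℂ) 1) := fun z hz =>
    (h2 z hz).differentiableAt.continuousAt.continuousWithinAt
  set γ : ℝ → ℂ := fun s => x + (s : ℂ) * (y - x) with hγdef
  have hγcont : Continuous γ := by
    simp only [hγdef]
    continuity
  have hγmem : ∀ s : ℝ, s ∈ Set.Icc (0:ℝ) 1 → γ s ∈ ball (0:ℂ) 1 := by
    intro s hs
    have hconv := convex_ball (0:ℂ) 1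
    have hmem := hconv hx hy (by linarith [hs.2] : (0:ℝ) ≤ 1 - s) hs.1 (by ring)
    convert hmem using 1
    simp only [hγdef]
    rw [Complex.real_smul, Complex.real_smul]
    push_cast
    ring
  have hγd : ∀ s : ℝ, HasDerivAt γ (y - x) s := by
    intro s
    have h0 : HasDerivAt (fun s : ℝ => (s : ℂ)) 1 s := by
      simpa using (hasDerivAt_id ((s : ℝ) : ℂ)).comp_ofReal
    simpa [hγdef] using (h0.mul_const (y - x)).const_add x
  have hIccuIcc : Set.uIcc (0:ℝ) 1 = Set.Icc (0:ℝ) 1 :=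
    Set.uIcc_of_le (by norm_num)
  have hd : ∀ s ∈ Set.uIcc (0:ℝ) 1,
      HasDerivAt (fun t : ℝ => f (γ t)) ((y - x) • F (γ s)) s := by
    intro s hs
    rw [hIccuIcc] at hs
    exact HasDerivAt.scomp_of_eq s (h1 _ (hγmem s hs)) (hγd s) rfl
  have hFγcont : ContinuousOn (fun s : ℝ => F (γ s)) (Set.uIcc (0:ℝ) 1) := by
    apply hFc.comp hγcont.continuousOn
    intro s hs
    rw [hIccuIcc] at hs
    exact hγmem s hs
  have hcont : ContinuousOn (fun s : ℝ => (y - x) • F (γ s)) (Set.uIcc (0:ℝ) 1) :=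
    hFγcont.const_smul (y - x)
  have hint : IntervalIntegrable (fun s : ℝ => (y - x) • F (γ s))
      MeasureTheory.volume 0 1 := hcont.intervalIntegrable
  have hFint : IntervalIntegrable (fun s : ℝ => F (γ s))
      MeasureTheory.volume 0 1 := hFγcont.intervalIntegrable
  have heval := intervalIntegral.integral_eq_sub_of_hasDerivAt hd hint
  have hγ0 : γ 0 = x := by simp [hγdef]
  have hγ1 : γ 1 = y := by simp [hγdef]
  rw [hγ0, hγ1, ← hxy, sub_self] at heval
  rw [intervalIntegral.integral_smul] at heval
  have hyx : y - x ≠ 0 := sub_ne_zero_of_ne (Ne.symm hne)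
  have hI0 : (∫ s in (0:ℝ)..1, F (γ s)) = 0 := by
    rcases smul_eq_zero.mp heval with hc | hc
    · exact absurd hc hyx
    · exact hc
  have hre : (∫ s in (0:ℝ)..1, F (γ s)).re = ∫ s in (0:ℝ)..1, (F (γ s)).re := by
    have hcc := Complex.reCLM.intervalIntegral_comp_comm hFint
    simp only [Complex.reCLM_apply] at hcc
    exact hcc.symm
  have hrecont : ContinuousOn (fun s : ℝ => (F (γ s)).re) (Set.uIcc (0:ℝ) 1) :=
    Complex.continuous_re.comp_continuousOn hFγcont
  have hpos : 0 < ∫ s in (0:ℝ)..1, (F (γ s)).re := by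
    apply intervalIntegral.intervalIntegral_pos_of_pos_on hrecont.intervalIntegrable
    · intro s hs
      exact h3 _ (hγmem s ⟨hs.1.le, hs.2.le⟩)
    · norm_num
  rw [hI0] at hre
  simp only [Complex.zero_re] at hre
  linarith [hpos, hre]

lemma convexImage
    (h1 : ∀ z ∈ ball (0:ℂ) 1, HasDerivAt f (F z) z)
    (h2 : ∀ z ∈ ball (0:ℂ) 1, HasDerivAt F (G z) z)
    (h3 : ∀ z ∈ ball (0:ℂ) 1, 0 < (F z).re)
    (h4 : ∀ z ∈ ball (0:ℂ) 1, 0 < (1 + z * G z / F z).re) :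
    Convex ℝ (f '' ball (0:ℂ) 1) := by
  have hfd : DifferentiableOn ℂ f (ball (0:ℂ) 1) := fun z hz =>
    (h1 z hz).differentiableAt.differentiableWithinAt
  have hfc : ContinuousOn f (ball (0:ℂ) 1) := hfd.continuousOn
  have hopen : ∀ s ⊆ ball (0:ℂ) 1, IsOpen s → IsOpen (f '' s) := by
    have hana : AnalyticOnNhd ℂ f (ball (0:ℂ) 1) := hfd.analyticOnNhd isOpen_ball
    rcases hana.is_constant_or_isOpen (convex_ball (0:ℂ) 1).isPreconnected with ⟨v, hv⟩ | h
    · exfalso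
      have h0 : (0:ℂ) ∈ ball (0:ℂ) 1 := by
        rw [mem_ball_zero_iff]; norm_num
      have hhalf : (1/2 : ℂ) ∈ ball (0:ℂ) 1 := by
        rw [mem_ball_zero_iff]; norm_num
      have := injOn h1 h2 h3 h0 hhalf (by rw [hv 0 h0, hv _ hhalf])
      norm_num at this
    · exact h
  have hlin : ∀ (N q u₁ u₂ : ℂ) (s t : ℝ), s + t = 1 →
      (N * ((s • u₁ + t • u₂) - q)).re
        = s * (N * (u₁ - q)).re + t * (N * (u₂ - q)).re := by
    intro N q u₁ u₂ s t hst
    have hst' : (s : ℂ) + (t : ℂ) = 1 := by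
      exact_mod_cast congrArg (fun x : ℝ => (x : ℂ)) hst
    have hcomb : N * ((s • u₁ + t • u₂) - q)
        = (s : ℂ) * (N * (u₁ - q)) + (t : ℂ) * (N * (u₂ - q)) := by
      rw [Complex.real_smul, Complex.real_smul]
      linear_combination (N * q) * hst'
    rw [hcomb, Complex.add_re, Complex.re_ofReal_mul, Complex.re_ofReal_mul]
  rw [convex_iff_segment_subset]
  rintro w₁ ⟨z₁, hz₁, rfl⟩ w₂ ⟨z₂, hz₂, rfl⟩
  set r : ℝ := (max ‖z₁‖ ‖z₂‖ + 1) / 2 with hrdef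
  have hn₁ : ‖z₁‖ < 1 := mem_ball_zero_iff.mp hz₁
  have hn₂ : ‖z₂‖ < 1 := mem_ball_zero_iff.mp hz₂
  have hmax1 : max ‖z₁‖ ‖z₂‖ < 1 := max_lt hn₁ hn₂
  have hmax0 : (0:ℝ) ≤ max ‖z₁‖ ‖z₂‖ := le_max_of_le_left (norm_nonneg _)
  have hr0 : 0 < r := by rw [hrdef]; linarith
  have hr1 : r < 1 := by rw [hrdef]; linarith
  have hz₁r : z₁ ∈ closedBall (0:ℂ) r := by
    rw [mem_closedBall_zero_iff, hrdef]
    have := le_max_left ‖z₁‖ ‖z₂‖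
    linarith
  have hz₂r : z₂ ∈ closedBall (0:ℂ) r := by
    rw [mem_closedBall_zero_iff, hrdef]
    have := le_max_right ‖z₁‖ ‖z₂‖
    linarith
  have h0r : (0:ℂ) ∈ ball (0:ℂ) r := by
    rw [mem_ball_zero_iff]
    simpa using hr0
  have HP := fun (ζ : ℂ) (hζ : ζ ∈ sphere (0:ℂ) r) =>
    halfplane h1 h2 h3 h4 hr0 hr1 hζ
  set K : Set ℂ :=
    {u | ∀ ζ ∈ sphere (0:ℂ) r, ((starRingEnd ℂ) (ζ * F ζ) * (u - f ζ)).re ≤ 0} with hKdef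
  set Ks : Set ℂ :=
    {u | ∀ ζ ∈ sphere (0:ℂ) r, ((starRingEnd ℂ) (ζ * F ζ) * (u - f ζ)).re < 0} with hKsdef
  have hKconv : Convex ℝ K := by
    intro u₁ hu₁ u₂ hu₂ s t hs ht hst
    simp only [hKdef, Set.mem_setOf_eq] at hu₁ hu₂ ⊢
    intro ζ hζ
    rw [hlin _ _ _ _ s t hst]
    have g₁ := hu₁ ζ hζ
    have g₂ := hu₂ ζ hζ
    have := mul_nonpos_of_nonneg_of_nonpos hs g₁
    have := mul_nonpos_of_nonneg_of_nonpos ht g₂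
    linarith
  have hw₁ : f z₁ ∈ K := by
    simp only [hKdef, Set.mem_setOf_eq]
    intro ζ hζ
    exact (HP ζ hζ).1 z₁ hz₁r
  have hw₂ : f z₂ ∈ K := by
    simp only [hKdef, Set.mem_setOf_eq]
    intro ζ hζ
    exact (HP ζ hζ).1 z₂ hz₂r
  have hKsub : K ⊆ f '' ball (0:ℂ) 1 := by
    intro u hu
    simp only [hKdef, Set.mem_setOf_eq] at hu
    set U : Set ℂ := f '' ball (0:ℂ) r with hUdef
    have hUopen : IsOpen U := hopen _ (ball_subset_ball hr1.le) isOpen_ball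
    have hclosed : IsClosed (f '' closedBall (0:ℂ) r) :=
      ((isCompact_closedBall (0:ℂ) r).image_of_continuousOn
        (hfc.mono (closedBall_subset_ball hr1))).isClosed
    have hclosureU : closure U ⊆ f '' closedBall (0:ℂ) r :=
      closure_minimal (Set.image_mono ball_subset_closedBall) hclosed
    have hKsU : Ks ⊆ U := by
      have hKsconv : Convex ℝ Ks := by
        intro u₁ hu₁ u₂ hu₂ s t hs ht hst
        simp only [hKsdef, Set.mem_setOf_eq] at hu₁ hu₂ ⊢
        intro ζ hζ
        rw [hlin _ _ _ _ s t hst]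
        have g₁ := hu₁ ζ hζ
        have g₂ := hu₂ ζ hζ
        rcases eq_or_lt_of_le hs with hs0 | hs0
        · have hteq : t = 1 := by linarith
          rw [← hs0, hteq]
          simpa using g₂
        · have := mul_nonpos_of_nonneg_of_nonpos ht g₂.le
          nlinarith
      have hsplit : Ks ⊆ U ∪ (closure U)ᶜ := by
        intro u' hu'
        simp only [hKsdef, Set.mem_setOf_eq] at hu'
        by_cases hU' : u' ∈ U
        · exact Or.inl hU'
        · refine Or.inr ?_
          intro hcl
          obtain ⟨z', hz', hfz'⟩ := hclosureU hcl
          rw [mem_closedBall_zero_iff] at hz'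
          rcases lt_or_eq_of_le hz' with hlt | heq
          · exact hU' ⟨z', mem_ball_zero_iff.mpr hlt, hfz'⟩
          · have hz'' : z' ∈ sphere (0:ℂ) r := by
              rw [mem_sphere_zero_iff_norm]; exact heq
            have hcontr := hu' z' hz''
            rw [← hfz', sub_self, mul_zero, Complex.zero_re] at hcontr
            exact lt_irrefl 0 hcontr
      have hne : (Ks ∩ U).Nonempty := by
        refine ⟨f 0, ?_, ⟨0, h0r, rfl⟩⟩
        simp only [hKsdef, Set.mem_setOf_eq]
        intro ζ hζ
        exact (HP ζ hζ).2 0 h0r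
      exact hKsconv.isPreconnected.subset_left_of_subset_union hUopen
        isClosed_closure.isOpen_compl
        (disjoint_compl_right.mono_left subset_closure) hsplit hne
    have hmemcl : u ∈ closure U := by
      have hcontt : Continuous (fun t : ℝ => t • (f 0) + (1 - t) • u) :=
        (continuous_id.smul continuous_const).add
          ((continuous_const.sub continuous_id).smul continuous_const)
      have htend : Filter.Tendsto (fun t : ℝ => t • (f 0) + (1 - t) • u)
          (nhdsWithin 0 (Set.Ioc (0:ℝ) 1)) (nhds u) := by
        have h0v : (0:ℝ) • (f 0) + (1 - (0:ℝ)) • u = u := by simp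
        have := (hcontt.tendsto 0).mono_left
          (nhdsWithin_le_nhds : nhdsWithin (0:ℝ) (Set.Ioc (0:ℝ) 1) ≤ nhds 0)
        rwa [h0v] at this
      have hnb : (nhdsWithin (0:ℝ) (Set.Ioc (0:ℝ) 1)).NeBot := by
        apply mem_closure_iff_nhdsWithin_neBot.mp
        rw [closure_Ioc (by norm_num : (0:ℝ) ≠ 1)]
        exact ⟨le_refl 0, by norm_num⟩
      apply mem_closure_of_tendsto htend
      filter_upwards [eventually_mem_nhdsWithin] with t ht
      apply hKsU
      simp only [hKsdef, Set.mem_setOf_eq]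
      intro ζ hζ
      rw [hlin _ _ _ _ t (1 - t) (by ring)]
      have g₁ := (HP ζ hζ).2 0 h0r
      have g₂ := hu ζ hζ
      have ht1 : 0 < t := ht.1
      have ht2 : t ≤ 1 := ht.2
      have hmp := mul_pos ht1 (neg_pos.mpr g₁)
      have := mul_nonpos_of_nonneg_of_nonpos (by linarith : (0:ℝ) ≤ 1 - t) g₂
      nlinarith
    obtain ⟨z', hz', hfz'⟩ := hclosureU hmemcl
    exact ⟨z', closedBall_subset_ball hr1 hz', hfz'⟩
  intro u hu
  exact hKsub (hKconv.segment_subset hw₁ hw₂ hu)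

end General

end StudyAux

open StudyAux

set_option maxHeartbeats 1000000

/-- For real `a ≥ 1 + √2` and `|λ| = 1`, the function
`φ(z) = a log(a/(a-z)) + λ (a log(a/(a-z)) - z)` satisfies `φ'(z) = (a+λz)/(a-z)` and
`Re(1 + zφ''(z)/φ'(z)) > 0` on `𝔻`; in particular `φ` is convex univalent on `𝔻`. -/
theorem shifted_log_convex_univalent
    (a : ℝ) (ha : 1 + Real.sqrt 2 ≤ a) (lam : ℂ) (hlam : ‖lam‖ = 1)
    (φ : ℂ → ℂ)
    (hφ : ∀ z : ℂ, φ z = (a : ℂ) * Complex.log ((a : ℂ) / ((a : ℂ) - z))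
        + lam * ((a : ℂ) * Complex.log ((a : ℂ) / ((a : ℂ) - z)) - z)) :
    (∀ z ∈ ball (0:ℂ) 1, deriv φ z = ((a : ℂ) + lam * z) / ((a : ℂ) - z)) ∧
    (∀ z ∈ ball (0:ℂ) 1, 0 < (1 + z * deriv (deriv φ) z / deriv φ z).re) ∧
    Set.InjOn φ (ball (0:ℂ) 1) ∧
    Convex ℝ (φ '' ball (0:ℂ) 1) := by
  have hs2 : 1 < Real.sqrt 2 := by
    nlinarith [Real.sq_sqrt (by norm_num : (0:ℝ) ≤ 2), Real.sqrt_nonneg 2]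
  have ha2 : 2 < a := by linarith
  have hA : 0 ≤ a ^ 2 - 2 * a - 1 := by
    nlinarith [Real.sq_sqrt (by norm_num : (0:ℝ) ≤ 2), Real.sqrt_nonneg 2]
  set F : ℂ → ℂ := fun z => ((a : ℂ) + lam * z) / ((a : ℂ) - z) with hFdef
  set G : ℂ → ℂ := fun z => (a : ℂ) * (1 + lam) / ((a : ℂ) - z) ^ 2 with hGdef
  -- nonvanishing denominators
  have habs : ∀ z ∈ ball (0:ℂ) 1, ‖z‖ < 1 := by
    intro z hz
    rwa [mem_ball_zero_iff] at hz
  have hAz : ∀ z ∈ ball (0:ℂ) 1, (a : ℂ) - z ≠ 0 := by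
    intro z hz h
    have hz1 := habs z hz
    have : z = (a : ℂ) := by linear_combination -h
    rw [this] at hz1
    rw [Complex.norm_real, Real.norm_eq_abs] at hz1
    rw [abs_of_pos (by linarith)] at hz1
    linarith
  have hBz : ∀ z ∈ ball (0:ℂ) 1, (a : ℂ) + lam * z ≠ 0 := by
    intro z hz h
    have hz1 := habs z hz
    have hml : ‖lam * z‖ = ‖z‖ := by
      rw [norm_mul, hlam, one_mul]
    have : lam * z = -(a : ℂ) := by linear_combination h
    rw [this] at hml
    rw [norm_neg, Complex.norm_real, Real.norm_eq_abs, abs_of_pos (by linarith : (0:ℝ) < a)] at hml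
    linarith
  -- F has positive real part
  have h3 : ∀ z ∈ ball (0:ℂ) 1, 0 < (F z).re := by
    intro z hz
    have hz1 := habs z hz
    have hwne := hAz z hz
    have hnsq : 0 < Complex.normSq ((a : ℂ) - z) := Complex.normSq_pos.mpr hwne
    have hc : lam.re ^ 2 + lam.im ^ 2 = 1 := by
      have hh := Complex.sq_norm lam
      rw [hlam, Complex.normSq_apply] at hh
      nlinarith [hh]
    have hzsq : z.re ^ 2 + z.im ^ 2 < 1 := by
      have hh := Complex.sq_norm z
      rw [Complex.normSq_apply] at hh
      nlinarith [norm_nonneg z]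
    have h1r : ((a : ℂ) + lam * z).re = a + (lam.re * z.re - lam.im * z.im) := by
      simp [Complex.add_re, Complex.mul_re]
    have h2r : ((a : ℂ) + lam * z).im = lam.re * z.im + lam.im * z.re := by
      simp [Complex.add_im, Complex.mul_im]
    have h3r : ((a : ℂ) - z).re = a - z.re := by simp
    have h4r : ((a : ℂ) - z).im = -z.im := by simp
    rw [hFdef]
    simp only []
    rw [Complex.div_re, h1r, h2r, h3r, h4r, ← add_div]
    apply div_pos ?_ hnsq
    set p := z.re
    set q := z.im
    set cc := lam.re
    set d := lam.im
    have hT0 : (0:ℝ) ≤ p ^ 2 + q ^ 2 := by positivity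
    have hp : p ≤ (p ^ 2 + q ^ 2 + 1) / 2 := by nlinarith [sq_nonneg (p - 1)]
    have hu2 : (cc * p - d * q) ^ 2 ≤ p ^ 2 + q ^ 2 := by
      nlinarith [sq_nonneg (cc * q + d * p), hc]
    have hun : -((p ^ 2 + q ^ 2 + 1) / 2) ≤ cc * p - d * q := by
      nlinarith [sq_nonneg (cc * p - d * q + 1)]
    have hc1 : cc ≤ 1 := by nlinarith [sq_nonneg d]
    have e1 : a * p ≤ a * ((p ^ 2 + q ^ 2 + 1) / 2) :=
      mul_le_mul_of_nonneg_left hp (by linarith)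
    have e2 : a * (-((p ^ 2 + q ^ 2 + 1) / 2)) ≤ a * (cc * p - d * q) :=
      mul_le_mul_of_nonneg_left hun (by linarith)
    have e3 : cc * (p ^ 2 + q ^ 2) ≤ 1 * (p ^ 2 + q ^ 2) :=
      mul_le_mul_of_nonneg_right hc1 hT0
    nlinarith [e1, e2, e3, hA, mul_pos (show (0:ℝ) < a + 1 by linarith)
      (show (0:ℝ) < 1 - (p ^ 2 + q ^ 2) by linarith)]
  -- derivative of φ
  have hD1 : ∀ z ∈ ball (0:ℂ) 1, HasDerivAt φ (F z) z := by
    intro z hz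
    have hz1 := habs z hz
    have hwne := hAz z hz
    have hane : (a : ℂ) ≠ 0 := by
      intro h
      rw [Complex.ofReal_eq_zero] at h
      linarith
    have hdd : HasDerivAt (fun z : ℂ => (a : ℂ) - z) (-1) z := by
      simpa using (hasDerivAt_id z).const_sub (a : ℂ)
    have hinv : HasDerivAt (fun z : ℂ => ((a : ℂ) - z)⁻¹) (1 / ((a : ℂ) - z) ^ 2) z := by
      have := hdd.inv hwne
      refine this.congr_deriv ?_
      field_simp
    have hquot : HasDerivAt (fun z : ℂ => (a : ℂ) / ((a : ℂ) - z))
        ((a : ℂ) / ((a : ℂ) - z) ^ 2) z := by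
      have h' : (fun z : ℂ => (a : ℂ) / ((a : ℂ) - z))
          = fun z : ℂ => (a : ℂ) * ((a : ℂ) - z)⁻¹ := by
        funext t
        rw [div_eq_mul_inv]
      rw [h']
      have := hinv.const_mul (a : ℂ)
      refine this.congr_deriv ?_
      field_simp
    have hslit : (a : ℂ) / ((a : ℂ) - z) ∈ Complex.slitPlane := by
      apply Or.inl
      have h3r : ((a : ℂ) - z).re = a - z.re := by simp
      have h4r : ((a : ℂ) - z).im = -z.im := by simp
      have hzre : z.re < 1 := lt_of_le_of_lt (Complex.re_le_norm z) hz1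
      have hnsq : 0 < Complex.normSq ((a : ℂ) - z) := Complex.normSq_pos.mpr hwne
      rw [Complex.div_re, h3r, h4r]
      simp only [Complex.ofReal_re, Complex.ofReal_im, zero_mul, zero_div]
      rw [add_zero]
      apply div_pos (mul_pos (by linarith) (by linarith)) hnsq
    have hlog : HasDerivAt (fun z : ℂ => Complex.log ((a : ℂ) / ((a : ℂ) - z)))
        (1 / ((a : ℂ) - z)) z := by
      have hcomp := (Complex.hasDerivAt_log hslit).comp z hquot
      refine hcomp.congr_deriv ?_
      have hne2 : (a : ℂ) / ((a : ℂ) - z) ≠ 0 := div_ne_zero hane hwne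
      field_simp
    have hψ : HasDerivAt (fun z : ℂ => (a : ℂ) * Complex.log ((a : ℂ) / ((a : ℂ) - z))
        + lam * ((a : ℂ) * Complex.log ((a : ℂ) / ((a : ℂ) - z)) - z)) (F z) z := by
      have hbase := hlog.const_mul (a : ℂ)
      have hsub := (hbase.sub (hasDerivAt_id z)).const_mul lam
      have hsum := hbase.add hsub
      refine hsum.congr_deriv ?_
      rw [hFdef]
      simp only []
      field_simp
      ring
    apply hψ.congr_of_eventuallyEq
    filter_upwards with x
    exact hφ x
  -- derivative of F
  have hD2 : ∀ z ∈ ball (0:ℂ) 1, HasDerivAt F (G z) z := by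
    intro z hz
    have hwne := hAz z hz
    have hc : HasDerivAt (fun z : ℂ => (a : ℂ) + lam * z) lam z := by
      simpa using ((hasDerivAt_id z).const_mul lam).const_add (a : ℂ)
    have hdd : HasDerivAt (fun z : ℂ => (a : ℂ) - z) (-1) z := by
      simpa using (hasDerivAt_id z).const_sub (a : ℂ)
    have hdiv := hc.div hdd hwne
    have : F = fun z : ℂ => ((a : ℂ) + lam * z) / ((a : ℂ) - z) := hFdef
    rw [this]
    refine hdiv.congr_deriv ?_
    rw [hGdef]
    simp only []
    congr 1
    ring
  -- the key inequality
  have h4 : ∀ z ∈ ball (0:ℂ) 1, 0 < (1 + z * G z / F z).re := by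
    intro z hz
    have hz1 := habs z hz
    have hwne := hAz z hz
    have hbne := hBz z hz
    have hFne : F z ≠ 0 := by
      rw [hFdef]
      exact div_ne_zero hbne hwne
    have hiden : 1 + z * G z / F z
        = 1 + (lam * z) / ((a : ℂ) + lam * z) + z / ((a : ℂ) - z) := by
      rw [hFdef, hGdef]
      simp only []
      have hbne' : (a:ℂ) + z * lam ≠ 0 := by rwa [mul_comm]
      field_simp
      ring
    rw [hiden]
    have hml : ‖lam * z‖ = ‖z‖ := by
      rw [norm_mul, hlam, one_mul]
    have hb1 := re_div_add a (lam * z) ha2 (by rw [hml]; exact hz1)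
    have hb2 := re_div_sub a z ha2 hz1
    rw [hml] at hb1
    set t := ‖z‖ with htdef
    have ht0 : 0 ≤ t := norm_nonneg z
    have htlt : t < 1 := hz1
    have hsum : (1 + (lam * z) / ((a : ℂ) + lam * z) + z / ((a : ℂ) - z)).re
        = 1 + ((lam * z) / ((a : ℂ) + lam * z)).re + (z / ((a : ℂ) - z)).re := by
      simp [Complex.add_re]
    rw [hsum]
    have hfrac : t / (a - t) + t / (a + t) < 1 := by
      rw [div_add_div _ _ (by linarith : a - t ≠ 0) (by linarith : a + t ≠ 0),
        div_lt_one (by nlinarith : (0:ℝ) < (a - t) * (a + t))]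
      nlinarith
    have hq1 : -(t / (a - t)) ≤ ((lam * z) / ((a : ℂ) + lam * z)).re := by
      rw [neg_div] at hb1
      exact hb1
    have hq2 : -(t / (a + t)) ≤ (z / ((a : ℂ) - z)).re := by
      rw [neg_div] at hb2
      exact hb2
    linarith
  refine ⟨?_, ?_, ?_, ?_⟩
  · intro z hz
    exact (hD1 z hz).deriv
  · intro z hz
    have hev : deriv φ =ᶠ[nhds z] F := by
      filter_upwards [isOpen_ball.mem_nhds hz] with x hx
      exact (hD1 x hx).deriv
    have hdd2 : deriv (deriv φ) z = G z := by
      rw [Filter.EventuallyEq.deriv_eq hev, (hD2 z hz).deriv]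
    rw [hdd2, (hD1 z hz).deriv]
    exact h4 z hz
  · exact StudyAux.injOn hD1 hD2 h3
  · exact StudyAux.convexImage hD1 hD2 h3 h4
end
end
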